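/- Let y ≥ 0, r satisfy yᵀA + rᵀ = 0 and yᵀb + rᵀ{ℓ',u'} > 0 with ℓ ≤ ℓ' ≤ u' ≤ u. Then the set {x : A x ≥ b, ℓ' ≤ x ≤ u'} is empty; moreover, computing the minimum activity of (yᵀA)x over the box [ℓ',u'] yields Σ_{j:(yᵀA)_j>0}(yᵀA)_j ℓ'_j + Σ_{j:(yᵀA)_j<0}(yᵀA)_j u'_j < yᵀb. -/
import Mathlib


open Matrix

noncomputable def boxVal {n : ℕ} (r l u : Fin n → ℝ) : ℝ :=
  ∑ j, if 0 < r j then r j * l j else r j * u j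

/-- A Farkas proof w.r.t. local bounds shows the local subproblem is empty, and
the minimum activity of the aggregated row `(yᵀA)x` over the local box is
strictly smaller than `yᵀb`. -/
theorem farkas_proof_local_infeasible_min_activity {m n : ℕ}
    (A : Matrix (Fin m) (Fin n) ℝ) (b : Fin m → ℝ)
    (l u l' u' : Fin n → ℝ) (h1 : l ≤ l') (h2 : l' ≤ u') (h3 : u' ≤ u)
    (y : Fin m → ℝ) (r : Fin n → ℝ) (hy : 0 ≤ y)
    (hzero : A.vecMul y + r = 0)
    (hpos : 0 < y ⬝ᵥ b + boxVal r l' u') :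
    (¬ ∃ x : Fin n → ℝ, b ≤ A.mulVec x ∧ l' ≤ x ∧ x ≤ u') ∧
      (∑ j, if 0 < A.vecMul y j then A.vecMul y j * l' j
            else A.vecMul y j * u' j) < y ⬝ᵥ b := by
  have hr : ∀ j, A.vecMul y j = -r j := by
    intro j
    have := congrFun hzero j
    simp only [Pi.add_apply, Pi.zero_apply] at this
    linarith
  constructor
  · rintro ⟨x, hbx, hlx, hxu⟩
    have h4 : boxVal r l' u' ≤ r ⬝ᵥ x := by
      unfold boxVal dotProduct
      apply Finset.sum_le_sum
      intro j _
      by_cases h : 0 < r j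
      · simp only [h, if_true]
        exact mul_le_mul_of_nonneg_left (hlx j) h.le
      · simp only [h, if_false]
        push_neg at h
        exact mul_le_mul_of_nonpos_left (hxu j) h
    have h5 : y ⬝ᵥ b ≤ y ⬝ᵥ A.mulVec x := by
      unfold dotProduct
      exact Finset.sum_le_sum fun i _ => mul_le_mul_of_nonneg_left (hbx i) (hy i)
    have h6 : y ⬝ᵥ A.mulVec x = -(r ⬝ᵥ x) := by
      rw [Matrix.dotProduct_mulVec]
      unfold dotProduct
      rw [← Finset.sum_neg_distrib]
      exact Finset.sum_congr rfl fun j _ => by rw [hr j]; ring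
    linarith
  · have hle : (∑ j, if 0 < A.vecMul y j then A.vecMul y j * l' j
            else A.vecMul y j * u' j) ≤ -(boxVal r l' u') := by
      unfold boxVal
      rw [← Finset.sum_neg_distrib]
      apply Finset.sum_le_sum
      intro j _
      rw [hr j]
      rcases lt_trichotomy (r j) 0 with h | h | h
      · have h1' : 0 < -r j := by linarith
        have h2' : ¬ 0 < r j := by linarith
        simp only [h1', h2', if_true, if_false]
        nlinarith [h2 j]
      · simp [h]
      · have h1' : ¬ 0 < -r j := by linarith
        simp only [h1', h, if_true, if_false]
        nlinarith [h2 j]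
    linarith
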